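/- For every k with 1 ≤ k ≤ 2n, the subspace g₂(P₂)_{ê₁…ê_k} := { A ∈ g₂(P₂) : A(ê_j, X) = 0 for all X ∈ V and all 1 ≤ j ≤ k } has dimension (n−k+1)(n−k)/2 + (n−1)(n−k) if k ≤ n, and dimension 0 if k > n; here g₂(P₂) is the space of symmetric bilinear forms A on V with A(X, C) = 0 and A(P_h X, J Y) = A(P_h Y, J X) for all X, Y ∈ V, and ê_j := h_j + j·v_j for 1 ≤ j ≤ n−1 (the scalar factor being the integer value of j), ê_n := S + v_1 + ⋯ + v_n, and ê_{n+j} := v_j for 1 ≤ j ≤ n. -/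

import Mathlib

set_option synthInstance.maxHeartbeats 1000000
set_option maxHeartbeats 1000000

noncomputable section

/-- The pointwise model `V = (Fin n → ℝ) × (Fin n → ℝ)` of the double tangent space
`T_x(TM)` for a spray on an `n`-dimensional manifold, in an adapted basis. -/
abbrev V (n : ℕ) : Type := (Fin n → ℝ) × (Fin n → ℝ)

/-- The vertical endomorphism `J (x, y) = (0, x)`. -/
def Jmap (n : ℕ) : V n →ₗ[ℝ] V n where
  toFun p := (0, p.1)
  map_add' a b := by simp
  map_smul' c a := by simp

/-- The horizontal projector `P_h (x, y) = (x, 0)`. -/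
def Ph (n : ℕ) : V n →ₗ[ℝ] V n where
  toFun p := (p.1, 0)
  map_add' a b := by simp
  map_smul' c a := by simp

/-- The `j`-th standard basis vector of `Fin n → ℝ`, indexed by `1 ≤ j ≤ n`
(zero if `j` is out of range). -/
def dlt (n j : ℕ) : Fin n → ℝ := fun i => if (i : ℕ) + 1 = j then 1 else 0

/-- The horizontal basis vector `h_j`, `1 ≤ j ≤ n`. -/
def hvec (n j : ℕ) : V n := (dlt n j, 0)

/-- The vertical basis vector `v_j`, `1 ≤ j ≤ n`. -/
def vvec (n j : ℕ) : V n := (0, dlt n j)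

/-- The spray vector `S = h_n`. -/
def Svec (n : ℕ) : V n := hvec n n

/-- The Liouville vector `C = v_n = J S`. -/
def Cvec (n : ℕ) : V n := vvec n n

/-- Bilinear forms on `V n`. -/
abbrev Bil (n : ℕ) := V n →ₗ[ℝ] V n →ₗ[ℝ] ℝ

/-- Trilinear forms on `V n` (bundled). -/
abbrev Tri (n : ℕ) := V n →ₗ[ℝ] V n →ₗ[ℝ] V n →ₗ[ℝ] ℝ

/-- The rotated basis vectors `ê_1, …, ê_{2n}` (1-indexed): `ê_j = h_j + j·v_j` for
`j < n`, `ê_n = S + v_1 + ⋯ + v_n`, and `ê_{n+j} = v_j`. -/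
def ehat (n j : ℕ) : V n :=
  if j < n then hvec n j + (j : ℝ) • vvec n j
  else if j = n then Svec n + ∑ i ∈ Finset.Icc 1 n, vvec n i
  else vvec n (j - n)

/-- The subspace `g₂(P₂)_{ê₁…ê_k}` of `g₂(P₂)` of forms annihilating `ê_1, …, ê_k`
in the first argument. -/
def g2P2e (n k : ℕ) : Submodule ℝ (Bil n) where
  carrier := {A | (∀ X Y, A X Y = A Y X) ∧ (∀ X, A X (Cvec n) = 0) ∧
    (∀ X Y, A (Ph n X) (Jmap n Y) = A (Ph n Y) (Jmap n X)) ∧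
    (∀ j, 1 ≤ j → j ≤ k → ∀ X, A (ehat n j) X = 0)}
  add_mem' := by
    rintro a b ⟨ha1, ha2, ha3, ha4⟩ ⟨hb1, hb2, hb3, hb4⟩
    refine ⟨fun X Y => ?_, fun X => ?_, fun X Y => ?_, fun j hj1 hj2 X => ?_⟩ <;>
      simp only [LinearMap.add_apply]
    · linear_combination ha1 X Y + hb1 X Y
    · linear_combination ha2 X + hb2 X
    · linear_combination ha3 X Y + hb3 X Y
    · linear_combination ha4 j hj1 hj2 X + hb4 j hj1 hj2 X
  zero_mem' := ⟨fun X Y => by simp, fun X => by simp, fun X Y => by simp,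
    fun j hj1 hj2 X => by simp⟩
  smul_mem' := by
    rintro c a ⟨ha1, ha2, ha3, ha4⟩
    refine ⟨fun X Y => ?_, fun X => ?_, fun X Y => ?_, fun j hj1 hj2 X => ?_⟩ <;>
      simp only [LinearMap.smul_apply, smul_eq_mul]
    · linear_combination c * ha1 X Y
    · linear_combination c * ha2 X
    · linear_combination c * ha3 X Y
    · linear_combination c * ha4 j hj1 hj2 X

abbrev Idx (n : ℕ) := Fin n ⊕ Fin n
def eb (n : ℕ) : Idx n → V n
  | Sum.inl i => (Pi.single i 1, 0)
  | Sum.inr i => (0, Pi.single i 1)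
def cf (n : ℕ) : Idx n → (V n →ₗ[ℝ] ℝ)
  | Sum.inl i => (LinearMap.proj i).comp (LinearMap.fst ℝ _ _)
  | Sum.inr i => (LinearMap.proj i).comp (LinearMap.snd ℝ _ _)
lemma cf_apply_inl (n : ℕ) (i : Fin n) (X : V n) : cf n (Sum.inl i) X = X.1 i := rfl
lemma cf_apply_inr (n : ℕ) (i : Fin n) (X : V n) : cf n (Sum.inr i) X = X.2 i := rfl
def basV (n : ℕ) : Module.Basis (Idx n) ℝ (V n) := (Pi.basisFun ℝ (Fin n)).prod (Pi.basisFun ℝ (Fin n))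
lemma basV_eq (n : ℕ) (a : Idx n) : basV n a = eb n a := by
  cases a with
  | inl i => simp [basV, eb, Prod.ext_iff, Pi.basisFun_apply]
  | inr i => simp [basV, eb, Prod.ext_iff, Pi.basisFun_apply]
lemma cf_eb (n : ℕ) (a c : Idx n) : cf n a (eb n c) = if a = c then 1 else 0 := by
  cases a <;> cases c <;>
    simp [cf_apply_inl, cf_apply_inr, eb, Pi.single_apply, eq_comm]
lemma bil_ext {n : ℕ} {A B : Bil n} (h : ∀ a c, A (eb n a) (eb n c) = B (eb n a) (eb n c)) :
    A = B := by
  apply (basV n).ext; intro a; apply (basV n).ext; intro c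
  rw [basV_eq, basV_eq]; exact h a c
def bform {n : ℕ} (T : Idx n → Idx n → ℝ) : Bil n :=
  ∑ a : Idx n, ∑ c : Idx n, T a c • ((cf n a).smulRight (cf n c))
lemma bform_apply {n : ℕ} (T : Idx n → Idx n → ℝ) (X Y : V n) :
    bform T X Y = ∑ a : Idx n, ∑ c : Idx n, T a c * (cf n a X * cf n c Y) := by
  simp [bform, LinearMap.sum_apply, LinearMap.smul_apply, smul_eq_mul, mul_assoc]
lemma bform_eb {n : ℕ} (T : Idx n → Idx n → ℝ) (a c : Idx n) :
    bform T (eb n a) (eb n c) = T a c := by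
  rw [bform_apply]
  rw [Finset.sum_eq_single a, Finset.sum_eq_single c]
  · simp [cf_eb]
  · intro b _ hb; simp [cf_eb, hb]
  · simp
  · intro b _ hb
    rw [Finset.sum_eq_zero]; intro x _; simp [cf_eb, hb]
  · simp

-- stage 2
lemma hvec_eb {n : ℕ} (j : ℕ) (h1 : 1 ≤ j) (h2 : j ≤ n) :
    hvec n j = eb n (Sum.inl ⟨j - 1, by omega⟩) := by
  simp only [hvec, eb, Prod.ext_iff]
  refine ⟨funext fun i => ?_, trivial⟩
  simp only [dlt, Pi.single_apply, Fin.ext_iff]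
  split_ifs with ha hb <;> first | rfl | omega

lemma vvec_eb {n : ℕ} (j : ℕ) (h1 : 1 ≤ j) (h2 : j ≤ n) :
    vvec n j = eb n (Sum.inr ⟨j - 1, by omega⟩) := by
  simp only [vvec, eb, Prod.ext_iff]
  refine ⟨trivial, funext fun i => ?_⟩
  simp only [dlt, Pi.single_apply, Fin.ext_iff]
  split_ifs with ha hb <;> first | rfl | omega

lemma Cvec_eb {n : ℕ} (hn : 1 ≤ n) : Cvec n = eb n (Sum.inr ⟨n - 1, by omega⟩) :=
  vvec_eb n hn le_rfl

lemma bform_symm {n : ℕ} (T : Idx n → Idx n → ℝ) (hT : ∀ a c, T a c = T c a)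
    (X Y : V n) : bform T X Y = bform T Y X := by
  rw [bform_apply, bform_apply, Finset.sum_comm]
  refine Finset.sum_congr rfl fun c _ => Finset.sum_congr rfl fun a _ => ?_
  rw [hT c a]; ring

lemma bform_C {n : ℕ} (hn : 1 ≤ n) (T : Idx n → Idx n → ℝ)
    (hT : ∀ a, T a (Sum.inr ⟨n - 1, by omega⟩) = 0) (X : V n) :
    bform T X (Cvec n) = 0 := by
  rw [bform_apply]
  refine Finset.sum_eq_zero fun a _ => Finset.sum_eq_zero fun c _ => ?_
  rw [Cvec_eb hn, cf_eb]
  by_cases h : c = Sum.inr ⟨n - 1, by omega⟩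
  · rw [h, hT]; ring
  · rw [if_neg h]; ring

lemma bform_PhJ {n : ℕ} (T : Idx n → Idx n → ℝ)
    (hT : ∀ i j : Fin n, T (Sum.inl i) (Sum.inr j) = T (Sum.inl j) (Sum.inr i))
    (X Y : V n) : bform T (Ph n X) (Jmap n Y) = bform T (Ph n Y) (Jmap n X) := by
  have key : ∀ Z W : V n, bform T (Ph n Z) (Jmap n W)
      = ∑ i : Fin n, ∑ j : Fin n, T (Sum.inl i) (Sum.inr j) * (Z.1 i * W.1 j) := by
    intro Z W
    rw [bform_apply]
    rw [Fintype.sum_sum_type]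
    have h2 : ∀ a : Fin n, (∑ c : Idx n, T (Sum.inr a) c *
        (cf n (Sum.inr a) (Ph n Z) * cf n c (Jmap n W))) = 0 := by
      intro a
      refine Finset.sum_eq_zero fun c _ => ?_
      have : cf n (Sum.inr a) (Ph n Z) = 0 := by simp [cf_apply_inr, Ph]
      rw [this]; ring
    rw [Finset.sum_congr rfl fun a _ => h2 a]
    simp only [Finset.sum_const_zero, add_zero]
    refine Finset.sum_congr rfl fun i _ => ?_
    rw [Fintype.sum_sum_type]
    have h3 : ∀ a : Fin n, T (Sum.inl i) (Sum.inl a) *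
        (cf n (Sum.inl i) (Ph n Z) * cf n (Sum.inl a) (Jmap n W)) = 0 := by
      intro a
      have : cf n (Sum.inl a) (Jmap n W) = 0 := by simp [cf_apply_inl, Jmap]
      rw [this]; ring
    rw [Finset.sum_congr rfl fun a _ => h3 a]
    simp only [Finset.sum_const_zero, zero_add]
    refine Finset.sum_congr rfl fun j _ => ?_
    have e1 : cf n (Sum.inl i) (Ph n Z) = Z.1 i := rfl
    have e2 : cf n (Sum.inr j) (Jmap n W) = W.1 j := rfl
    rw [e1, e2]
  rw [key, key, Finset.sum_comm]
  refine Finset.sum_congr rfl fun j _ => Finset.sum_congr rfl fun i _ => ?_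
  rw [hT j i]; ring

lemma bform_eb_left {n : ℕ} (T : Idx n → Idx n → ℝ) (a : Idx n) (X : V n) :
    bform T (eb n a) X = ∑ c : Idx n, T a c * cf n c X := by
  rw [bform_apply, Finset.sum_eq_single a]
  · refine Finset.sum_congr rfl fun c _ => ?_
    rw [cf_eb, if_pos rfl]; ring
  · intro b _ hb
    refine Finset.sum_eq_zero fun c _ => ?_
    rw [cf_eb, if_neg hb]; ring
  · simp

lemma bform_ann {n k : ℕ} (hk : k ≤ n - 1) (T : Idx n → Idx n → ℝ)
    (hT : ∀ p : Fin n, (p : ℕ) < k → ∀ c, T (Sum.inl p) c = -(((p : ℕ) : ℝ) + 1) * T (Sum.inr p) c)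
    (j : ℕ) (h1 : 1 ≤ j) (h2 : j ≤ k) (X : V n) : bform T (ehat n j) X = 0 := by
  have hn : 1 ≤ n := by omega
  have hjn : j < n := by omega
  rw [ehat, if_pos hjn]
  set p : Fin n := ⟨j - 1, by omega⟩ with hp
  have hh : hvec n j = eb n (Sum.inl p) := hvec_eb j h1 (le_of_lt hjn)
  have hv : vvec n j = eb n (Sum.inr p) := vvec_eb j h1 (le_of_lt hjn)
  rw [hh, hv]
  rw [map_add, map_smul, LinearMap.add_apply, LinearMap.smul_apply]
  rw [bform_eb_left, bform_eb_left]
  have hpk : (p : ℕ) < k := by simp [hp]; omega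
  have hcast : ((j : ℕ) : ℝ) = ((p : ℕ) : ℝ) + 1 := by
    have : (p : ℕ) + 1 = j := by simp [hp]; omega
    rw [← this]; push_cast; ring
  rw [hcast, smul_eq_mul, Finset.mul_sum, ← Finset.sum_add_distrib]
  refine Finset.sum_eq_zero fun c _ => ?_
  rw [hT p hpk c]; ring

-- ### stage 3 : the free coordinates and the matrix construction
def Pfree (n k : ℕ) : Idx n × Idx n → Prop := fun p =>
  match p with
  | (Sum.inl i, Sum.inl j) => k ≤ (i : ℕ) ∧ (i : ℕ) ≤ (j : ℕ)
  | (Sum.inl i, Sum.inr j) => k ≤ (i : ℕ) ∧ (i : ℕ) ≤ (j : ℕ) ∧ (j : ℕ) < n - 1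
  | (Sum.inr _, Sum.inl _) => False
  | (Sum.inr i, Sum.inr j) =>
      (i : ℕ) ≤ (j : ℕ) ∧ (j : ℕ) < n - 1 ∧ ((i : ℕ) = (j : ℕ) ∨ k ≤ (j : ℕ))

instance PfreeDec (n k : ℕ) : DecidablePred (Pfree n k) := fun p => by
  rcases p with ⟨a | a, b | b⟩ <;> · dsimp only [Pfree]; infer_instance

abbrev SubT (n k : ℕ) := {p : Idx n × Idx n // Pfree n k p}

def extz (n k : ℕ) (c : SubT n k → ℝ) : Idx n × Idx n → ℝ :=
  fun p => if h : Pfree n k p then c ⟨p, h⟩ else 0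

def wsF (n k : ℕ) (u : Idx n × Idx n → ℝ) (p q : Fin n) : ℝ :=
  if (q : ℕ) < n - 1 ∧ ((p : ℕ) = (q : ℕ) ∨ k ≤ (q : ℕ)) then u (Sum.inr p, Sum.inr q) else 0

def Wb (n k : ℕ) (u : Idx n × Idx n → ℝ) (i j : Fin n) : ℝ :=
  if (i : ℕ) ≤ (j : ℕ) then wsF n k u i j else wsF n k u j i

def msF (n : ℕ) (u : Idx n × Idx n → ℝ) (i j : Fin n) : ℝ :=
  if (i : ℕ) ≤ (j : ℕ) then (if (j : ℕ) < n - 1 then u (Sum.inl i, Sum.inr j) else 0)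
  else (if (i : ℕ) < n - 1 then u (Sum.inl j, Sum.inr i) else 0)

def Mb (n k : ℕ) (u : Idx n × Idx n → ℝ) (i j : Fin n) : ℝ :=
  if (i : ℕ) < k then -(((i : ℕ) : ℝ) + 1) * Wb n k u i j
  else if (j : ℕ) < k then -(((j : ℕ) : ℝ) + 1) * Wb n k u j i
  else msF n u i j

def Hb (n k : ℕ) (u : Idx n × Idx n → ℝ) (i j : Fin n) : ℝ :=
  if (i : ℕ) < k then -(((i : ℕ) : ℝ) + 1) * Mb n k u j i
  else if (j : ℕ) < k then -(((j : ℕ) : ℝ) + 1) * Mb n k u i j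
  else (if (i : ℕ) ≤ (j : ℕ) then u (Sum.inl i, Sum.inl j) else u (Sum.inl j, Sum.inl i))

def Tb (n k : ℕ) (u : Idx n × Idx n → ℝ) : Idx n → Idx n → ℝ
  | Sum.inl i, Sum.inl j => Hb n k u i j
  | Sum.inl i, Sum.inr j => Mb n k u i j
  | Sum.inr i, Sum.inl j => Mb n k u j i
  | Sum.inr i, Sum.inr j => Wb n k u i j

-- symmetry lemmas
lemma Wb_symm (n k : ℕ) (u : Idx n × Idx n → ℝ) (i j : Fin n) :
    Wb n k u i j = Wb n k u j i := by
  unfold Wb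
  split_ifs with h1 h2 h2
  · have : i = j := Fin.ext (le_antisymm h1 h2); rw [this]
  · rfl
  · rfl
  · omega

lemma Wb_offdiag (n k : ℕ) (u : Idx n × Idx n → ℝ) {i j : Fin n}
    (hne : (i : ℕ) ≠ (j : ℕ)) (hi : (i : ℕ) < k) (hj : (j : ℕ) < k) :
    Wb n k u i j = 0 := by
  unfold Wb wsF
  split_ifs with h1 h2 h2 <;> first | rfl | omega

lemma msF_symm (n : ℕ) (u : Idx n × Idx n → ℝ) (i j : Fin n) :
    msF n u i j = msF n u j i := by
  rcases lt_trichotomy (i : ℕ) (j : ℕ) with h | h | h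
  · rw [msF, msF, if_pos (le_of_lt h), if_neg (not_le.2 h)]
  · have : i = j := Fin.ext h; rw [this]
  · rw [msF, msF, if_neg (not_le.2 h), if_pos (le_of_lt h)]

lemma Mb_symm (n k : ℕ) (u : Idx n × Idx n → ℝ) (i j : Fin n) :
    Mb n k u i j = Mb n k u j i := by
  by_cases h1 : (i : ℕ) < k <;> by_cases h2 : (j : ℕ) < k
  · by_cases hij : (i : ℕ) = (j : ℕ)
    · have : i = j := Fin.ext hij; rw [this]
    · rw [Mb, Mb, if_pos h1, if_pos h2, Wb_offdiag n k u hij h1 h2,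
        Wb_offdiag n k u (fun h => hij h.symm) h2 h1]
      ring
  · rw [Mb, Mb, if_pos h1, if_neg h2, if_pos h1]
  · rw [Mb, Mb, if_neg h1, if_pos h2, if_pos h2]
  · rw [Mb, Mb, if_neg h1, if_neg h2, if_neg h2, if_neg h1]
    exact msF_symm n u i j

lemma Hb_symm (n k : ℕ) (u : Idx n × Idx n → ℝ) (i j : Fin n) :
    Hb n k u i j = Hb n k u j i := by
  by_cases h1 : (i : ℕ) < k <;> by_cases h2 : (j : ℕ) < k
  · by_cases hij : (i : ℕ) = (j : ℕ)
    · have : i = j := Fin.ext hij; rw [this]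
    · rw [Hb, Hb, if_pos h1, if_pos h2, Mb, Mb, if_pos h2, if_pos h1,
        Wb_offdiag n k u hij h1 h2, Wb_offdiag n k u (fun h => hij h.symm) h2 h1]
      ring
  · rw [Hb, Hb, if_pos h1, if_neg h2, if_pos h1]
  · rw [Hb, Hb, if_neg h1, if_pos h2, if_pos h2]
  · rw [Hb, Hb, if_neg h1, if_neg h2, if_neg h2, if_neg h1]
    rcases lt_trichotomy (i : ℕ) (j : ℕ) with h | h | h
    · rw [if_pos (le_of_lt h), if_neg (not_le.2 h)]
    · have : i = j := Fin.ext h; rw [this]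
    · rw [if_neg (not_le.2 h), if_pos (le_of_lt h)]

lemma Tb_symm (n k : ℕ) (u : Idx n × Idx n → ℝ) (a c : Idx n) :
    Tb n k u a c = Tb n k u c a := by
  cases a <;> cases c <;>
    simp only [Tb, Hb_symm, Wb_symm, Mb_symm]

-- last column lemmas
lemma Wb_last (n k : ℕ) (hn : 1 ≤ n) (u : Idx n × Idx n → ℝ) (i : Fin n) :
    Wb n k u i ⟨n - 1, by omega⟩ = 0 := by
  have hi : (i : ℕ) ≤ n - 1 := by omega
  unfold Wb wsF
  rw [if_pos hi]
  split_ifs with h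
  · exfalso; exact absurd h.1 (by simp)
  · rfl

lemma Mb_last (n k : ℕ) (hn : 1 ≤ n) (hk : k ≤ n - 1) (u : Idx n × Idx n → ℝ) (i : Fin n) :
    Mb n k u i ⟨n - 1, by omega⟩ = 0 := by
  unfold Mb
  split_ifs with h1 h2
  · rw [Wb_last n k hn]; ring
  · exfalso; simp at h2; omega
  · unfold msF
    have hi : (i : ℕ) ≤ n - 1 := by omega
    rw [if_pos hi, if_neg (by simp)]

-- row relation for p < k
lemma Tb_row (n k : ℕ) (u : Idx n × Idx n → ℝ) (p : Fin n) (hp : (p : ℕ) < k) (c : Idx n) :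
    Tb n k u (Sum.inl p) c = -(((p : ℕ) : ℝ) + 1) * Tb n k u (Sum.inr p) c := by
  cases c with
  | inl j => show Hb n k u p j = _ * Mb n k u j p; rw [Hb, if_pos hp]
  | inr j => show Mb n k u p j = _ * Wb n k u p j; rw [Mb, if_pos hp]

-- linearity
lemma wsF_lin (n k : ℕ) (u v : Idx n × Idx n → ℝ) (r : ℝ) (p q : Fin n) :
    wsF n k (fun x => u x + r * v x) p q = wsF n k u p q + r * wsF n k v p q := by
  unfold wsF; split_ifs <;> ring

lemma Wb_lin (n k : ℕ) (u v : Idx n × Idx n → ℝ) (r : ℝ) (i j : Fin n) :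
    Wb n k (fun x => u x + r * v x) i j = Wb n k u i j + r * Wb n k v i j := by
  unfold Wb; split_ifs <;> rw [wsF_lin]

lemma msF_lin (n : ℕ) (u v : Idx n × Idx n → ℝ) (r : ℝ) (i j : Fin n) :
    msF n (fun x => u x + r * v x) i j = msF n u i j + r * msF n v i j := by
  unfold msF; split_ifs <;> ring

lemma Mb_lin (n k : ℕ) (u v : Idx n × Idx n → ℝ) (r : ℝ) (i j : Fin n) :
    Mb n k (fun x => u x + r * v x) i j = Mb n k u i j + r * Mb n k v i j := by
  unfold Mb; split_ifs
  · rw [Wb_lin]; ring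
  · rw [Wb_lin]; ring
  · rw [msF_lin]

lemma Hb_lin (n k : ℕ) (u v : Idx n × Idx n → ℝ) (r : ℝ) (i j : Fin n) :
    Hb n k (fun x => u x + r * v x) i j = Hb n k u i j + r * Hb n k v i j := by
  unfold Hb; split_ifs
  · rw [Mb_lin]; ring
  · rw [Mb_lin]; ring
  · ring
  · ring

lemma Tb_lin (n k : ℕ) (u v : Idx n × Idx n → ℝ) (r : ℝ) (a c : Idx n) :
    Tb n k (fun x => u x + r * v x) a c = Tb n k u a c + r * Tb n k v a c := by
  cases a <;> cases c <;> simp only [Tb] <;>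
    first
      | rw [Hb_lin]
      | rw [Mb_lin]
      | rw [Wb_lin]

-- ### stage 4: the maps
lemma bform_add {n : ℕ} (T T' : Idx n → Idx n → ℝ) :
    bform (fun a c => T a c + T' a c) = bform T + bform T' := by
  unfold bform
  rw [← Finset.sum_add_distrib]
  refine Finset.sum_congr rfl fun a _ => ?_
  rw [← Finset.sum_add_distrib]
  refine Finset.sum_congr rfl fun c _ => ?_
  rw [add_smul]

lemma bform_smul {n : ℕ} (r : ℝ) (T : Idx n → Idx n → ℝ) :
    bform (fun a c => r * T a c) = r • bform T := by
  unfold bform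
  rw [Finset.smul_sum]
  refine Finset.sum_congr rfl fun a _ => ?_
  rw [Finset.smul_sum]
  refine Finset.sum_congr rfl fun c _ => ?_
  simp [mul_smul]

def sigmaMap (n k : ℕ) : (SubT n k → ℝ) →ₗ[ℝ] Bil n where
  toFun c := bform (Tb n k (extz n k c))
  map_add' c d := by
    show bform (Tb n k (extz n k (c + d)))
      = bform (Tb n k (extz n k c)) + bform (Tb n k (extz n k d))
    have h1 : extz n k (c + d) = fun x => extz n k c x + 1 * extz n k d x := by
      funext p; unfold extz; split_ifs <;> simp
    rw [h1]
    have h2 : Tb n k (fun x => extz n k c x + 1 * extz n k d x)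
        = fun a b => Tb n k (extz n k c) a b + Tb n k (extz n k d) a b := by
      funext a b; rw [Tb_lin]; ring
    rw [h2, bform_add]
  map_smul' r c := by
    show bform (Tb n k (extz n k (r • c))) = r • bform (Tb n k (extz n k c))
    have h1 : extz n k (r • c) = fun x => 0 + r * extz n k c x := by
      funext p; unfold extz; split_ifs <;> simp
    rw [h1]
    have h2 : Tb n k (fun x => 0 + r * extz n k c x)
        = fun a b => r * Tb n k (extz n k c) a b := by
      funext a b
      have h0 : Tb n k (fun _ : Idx n × Idx n => (0 : ℝ)) a b = 0 := by
        have := Tb_lin n k (fun _ => (0:ℝ)) (fun _ => (0:ℝ)) (-1) a b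
        simp only [mul_zero, add_zero, neg_mul, one_mul] at this
        linarith [this]
      have := Tb_lin n k (fun _ => (0:ℝ)) (extz n k c) r a b
      rw [h0] at this
      simpa using this
    rw [h2, bform_smul]

def piMap (n k : ℕ) : Bil n →ₗ[ℝ] (SubT n k → ℝ) where
  toFun A := fun s => A (eb n s.1.1) (eb n s.1.2)
  map_add' A B := rfl
  map_smul' r A := rfl

-- ### stage 5: membership and inverse lemmas
lemma sigma_mem (n k : ℕ) (hn : 1 ≤ n) (hk : k ≤ n - 1) (c : SubT n k → ℝ) :
    sigmaMap n k c ∈ g2P2e n k := by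
  set u := extz n k c with hu
  refine ⟨?_, ?_, ?_, ?_⟩
  · exact fun X Y => bform_symm (Tb n k u) (Tb_symm n k u) X Y
  · refine fun X => bform_C hn (Tb n k u) (fun a => ?_) X
    cases a with
    | inl i => exact Mb_last n k hn hk u i
    | inr i => exact Wb_last n k hn u i
  · exact fun X Y => bform_PhJ (Tb n k u) (fun i j => Mb_symm n k u i j) X Y
  · exact fun j h1 h2 X => bform_ann hk (Tb n k u) (Tb_row n k u) j h1 h2 X

lemma Tb_free (n k : ℕ) (c : SubT n k → ℝ) (p : Idx n × Idx n) (h : Pfree n k p) :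
    Tb n k (extz n k c) p.1 p.2 = c ⟨p, h⟩ := by
  obtain ⟨a, b⟩ := p
  cases a with
  | inl i =>
    cases b with
    | inl j =>
      obtain ⟨h1, h2⟩ := h
      show Hb n k (extz n k c) i j = _
      rw [Hb, if_neg (by omega), if_neg (by omega), if_pos h2]
      unfold extz
      rw [dif_pos]
      exact ⟨h1, h2⟩
    | inr j =>
      obtain ⟨h1, h2, h3⟩ := h
      show Mb n k (extz n k c) i j = _
      rw [Mb, if_neg (by omega), if_neg (by omega), msF, if_pos h2, if_pos h3]
      unfold extz
      rw [dif_pos]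
      exact ⟨h1, h2, h3⟩
  | inr i =>
    cases b with
    | inl j => exact h.elim
    | inr j =>
      obtain ⟨h1, h2⟩ := h
      show Wb n k (extz n k c) i j = _
      rw [Wb, if_pos h1, wsF, if_pos h2]
      unfold extz
      rw [dif_pos]
      exact ⟨h1, h2⟩

lemma pi_sigma (n k : ℕ) (c : SubT n k → ℝ) :
    piMap n k (sigmaMap n k c) = c := by
  funext s
  show bform (Tb n k (extz n k c)) (eb n s.1.1) (eb n s.1.2) = c s
  rw [bform_eb, Tb_free n k c s.1 s.2]

lemma sigma_pi (n k : ℕ) (hn : 1 ≤ n) (hk : k ≤ n - 1) (A : Bil n)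
    (hA : A ∈ g2P2e n k) : sigmaMap n k (piMap n k A) = A := by
  obtain ⟨hs, hC, hPJ, hann⟩ := hA
  set u := extz n k (piMap n k A) with hu
  have hufree : ∀ (p : Idx n × Idx n), Pfree n k p → u p = A (eb n p.1) (eb n p.2) := by
    intro p h; rw [hu]; unfold extz; rw [dif_pos h]; rfl
  have EC : ∀ X, A X (eb n (Sum.inr ⟨n - 1, by omega⟩)) = 0 := by
    intro X; rw [← Cvec_eb hn]; exact hC X
  have E3 : ∀ i j : Fin n, A (eb n (Sum.inl i)) (eb n (Sum.inr j))
      = A (eb n (Sum.inl j)) (eb n (Sum.inr i)) := by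
    intro i j; exact hPJ (eb n (Sum.inl i)) (eb n (Sum.inl j))
  have E1 : ∀ p : Fin n, (p : ℕ) < k → ∀ X, A (eb n (Sum.inl p)) X
      = -(((p : ℕ) : ℝ) + 1) * A (eb n (Sum.inr p)) X := by
    intro p hp X
    have hpn : (p : ℕ) + 1 < n := by omega
    have h := hann ((p : ℕ) + 1) (by omega) (by omega) X
    rw [ehat, if_pos hpn, hvec_eb _ (by omega) (by omega),
      vvec_eb _ (by omega) (by omega)] at h
    have hip : (⟨(p : ℕ) + 1 - 1, by omega⟩ : Fin n) = p := Fin.ext (by simp)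
    simp only [hip] at h
    rw [map_add, LinearMap.add_apply, map_smul, LinearMap.smul_apply, smul_eq_mul] at h
    push_cast at h
    linarith
  have E4 : ∀ i j : Fin n, (i : ℕ) ≠ (j : ℕ) → (i : ℕ) < k → (j : ℕ) < k →
      A (eb n (Sum.inr i)) (eb n (Sum.inr j)) = 0 := by
    intro i j hne hi hj
    have h1 := E1 i hi (eb n (Sum.inr j))
    have h2 := E1 j hj (eb n (Sum.inr i))
    have h3 := E3 i j
    have h4 := hs (eb n (Sum.inr j)) (eb n (Sum.inr i))
    have h6 : (((j : ℕ) : ℝ) - ((i : ℕ) : ℝ)) * A (eb n (Sum.inr i)) (eb n (Sum.inr j)) = 0 := by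
      linear_combination h3 - h1 + h2 + (-(((j : ℕ) : ℝ)) - 1) * h4
    rcases mul_eq_zero.1 h6 with h | h
    · exfalso
      have : ((i : ℕ) : ℝ) = ((j : ℕ) : ℝ) := by linarith
      exact hne (by exact_mod_cast this)
    · exact h
  have SW : ∀ i j : Fin n, Wb n k u i j = A (eb n (Sum.inr i)) (eb n (Sum.inr j)) := by
    have helper : ∀ i j : Fin n, (i : ℕ) ≤ (j : ℕ) →
        wsF n k u i j = A (eb n (Sum.inr i)) (eb n (Sum.inr j)) := by
      intro i j hij
      rw [wsF]
      split_ifs with h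
      · exact hufree (Sum.inr i, Sum.inr j) ⟨hij, h.1, h.2⟩
      · push_neg at h
        by_cases hj : (j : ℕ) < n - 1
        · have h2 := h hj
          exact (E4 i j h2.1 (by omega) (by omega)).symm
        · have hjl : j = ⟨n - 1, by omega⟩ := by
            apply Fin.ext; show (j : ℕ) = n - 1; omega
          rw [hjl]
          exact (EC _).symm
    intro i j
    rw [Wb]
    split_ifs with hij
    · exact helper i j hij
    · rw [helper j i (by omega)]
      exact hs _ _
  have SM : ∀ i j : Fin n, Mb n k u i j = A (eb n (Sum.inl i)) (eb n (Sum.inr j)) := by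
    intro i j
    rw [Mb]
    split_ifs with h1 h2
    · rw [SW i j, ← E1 i h1]
    · rw [SW j i, ← E1 j h2 (eb n (Sum.inr i))]
      exact E3 j i
    · rw [msF]
      split_ifs with h3 h4 h5
      · exact hufree (Sum.inl i, Sum.inr j) ⟨by omega, h3, h4⟩
      · have hjl : j = ⟨n - 1, by omega⟩ := by
          apply Fin.ext; show (j : ℕ) = n - 1; omega
        rw [hjl]
        exact (EC _).symm
      · rw [hufree (Sum.inl j, Sum.inr i) ⟨by omega, by omega, h5⟩]
        exact E3 j i
      · have hil : i = ⟨n - 1, by omega⟩ := by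
          apply Fin.ext; show (i : ℕ) = n - 1; omega
        rw [E3 i j, hil]
        exact (EC _).symm
  have SH : ∀ i j : Fin n, Hb n k u i j = A (eb n (Sum.inl i)) (eb n (Sum.inl j)) := by
    intro i j
    rw [Hb]
    split_ifs with h1 h2 h3
    · rw [SM j i, E1 i h1 (eb n (Sum.inl j)), hs (eb n (Sum.inl j)) (eb n (Sum.inr i))]
    · rw [SM i j, hs (eb n (Sum.inl i)) (eb n (Sum.inl j)), E1 j h2,
        hs (eb n (Sum.inr j)) (eb n (Sum.inl i))]
    · exact (hufree (Sum.inl i, Sum.inl j) ⟨by omega, h3⟩)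
    · rw [hufree (Sum.inl j, Sum.inl i) ⟨by omega, by omega⟩]
      exact hs _ _
  apply bil_ext
  intro a c
  show bform (Tb n k u) (eb n a) (eb n c) = _
  rw [bform_eb]
  cases a with
  | inl i =>
    cases c with
    | inl j => exact SH i j
    | inr j => exact SM i j
  | inr i =>
    cases c with
    | inl j =>
      show Mb n k u j i = _
      rw [SM j i]
      exact hs _ _
    | inr j => exact SW i j

section Counting
open Finset
open Finset

-- inner-sum helpers
lemma inner_card (N a b : ℕ) (hb : b ≤ N) :
    ∑ j ∈ range N, (if a ≤ j ∧ j < b then 1 else 0) = b - a := by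
  rw [← Finset.card_filter]
  have : (range N).filter (fun j => a ≤ j ∧ j < b) = Finset.Ico a b := by
    ext x; simp [Finset.mem_range, Finset.mem_Ico]; omega
  rw [this, Nat.card_Ico]

lemma sum_desc (M : ℕ) : ∑ t ∈ range M, (M - t) = (∑ t ∈ range M, t) + M := by
  have h := Finset.sum_range_reflect (fun t => M - t) M
  rw [← h]
  have : ∀ t ∈ range M, M - (M - 1 - t) = t + 1 := by
    intro t ht; rw [Finset.mem_range] at ht; omega
  rw [Finset.sum_congr rfl this, Finset.sum_add_distrib]
  simp

lemma sum_desc' (M : ℕ) : ∑ t ∈ range M, (M - 1 - t) = ∑ t ∈ range M, t :=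
  Finset.sum_range_reflect (fun t => t) M

-- S1
lemma S1_eval (N k : ℕ) (hk : k ≤ N) :
    ∑ i ∈ range N, ∑ j ∈ range N, (if k ≤ i ∧ i ≤ j then 1 else 0)
      = (∑ t ∈ range (N - k), t) + (N - k) := by
  have step1 : ∀ i ∈ range N, ∑ j ∈ range N, (if k ≤ i ∧ i ≤ j then 1 else 0)
      = if k ≤ i then N - i else 0 := by
    intro i hi
    by_cases hki : k ≤ i
    · rw [if_pos hki]
      rw [← inner_card N i N le_rfl]
      refine Finset.sum_congr rfl fun j hj => ?_
      rw [Finset.mem_range] at hj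
      congr 1
      simp only [eq_iff_iff]
      constructor <;> intro h <;> [exact ⟨h.2, hj⟩; exact ⟨hki, h.1⟩]
    · rw [if_neg hki]
      exact Finset.sum_eq_zero fun j _ => by simp [hki]
  rw [Finset.sum_congr rfl step1, ← Finset.sum_filter]
  have hf : (range N).filter (fun i => k ≤ i) = Finset.Ico k N := by
    ext x; simp [Finset.mem_range, Finset.mem_Ico]; omega
  rw [hf, Finset.sum_Ico_eq_sum_range]
  have : ∀ t ∈ range (N - k), N - (k + t) = (N - k) - t := by intro t _; omega
  rw [Finset.sum_congr rfl this, sum_desc]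

-- S2
lemma S2_eval (N k : ℕ) (hk : k ≤ N - 1) (hN : 1 ≤ N) :
    ∑ i ∈ range N, ∑ j ∈ range N, (if k ≤ i ∧ i ≤ j ∧ j < N - 1 then 1 else 0)
      = ∑ t ∈ range (N - k), t := by
  have step1 : ∀ i ∈ range N, ∑ j ∈ range N, (if k ≤ i ∧ i ≤ j ∧ j < N - 1 then 1 else 0)
      = if k ≤ i then N - 1 - i else 0 := by
    intro i hi
    by_cases hki : k ≤ i
    · rw [if_pos hki]
      rw [← inner_card N i (N - 1) (by omega)]
      refine Finset.sum_congr rfl fun j hj => ?_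
      congr 1
      simp only [eq_iff_iff]
      constructor <;> intro h <;> [exact ⟨h.2.1, h.2.2⟩; exact ⟨hki, h.1, h.2⟩]
    · rw [if_neg hki]
      exact Finset.sum_eq_zero fun j _ => by simp [hki]
  rw [Finset.sum_congr rfl step1, ← Finset.sum_filter]
  have hf : (range N).filter (fun i => k ≤ i) = Finset.Ico k N := by
    ext x; simp [Finset.mem_range, Finset.mem_Ico]; omega
  rw [hf, Finset.sum_Ico_eq_sum_range]
  have : ∀ t ∈ range (N - k), N - 1 - (k + t) = (N - k) - 1 - t := by intro t _; omega
  rw [Finset.sum_congr rfl this, sum_desc']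

-- S3
lemma S3_eval (N k : ℕ) (hk : k ≤ N - 1) (hN : 1 ≤ N) :
    ∑ i ∈ range N, ∑ j ∈ range N, (if i ≤ j ∧ j < N - 1 ∧ (i = j ∨ k ≤ j) then 1 else 0)
      = (N - 1) + (N - 1 - k) * k + ∑ t ∈ range (N - 1 - k), t := by
  rw [Finset.sum_comm]
  have step1 : ∀ j ∈ range N, ∑ i ∈ range N, (if i ≤ j ∧ j < N - 1 ∧ (i = j ∨ k ≤ j) then 1 else 0)
      = if j < N - 1 then (if k ≤ j then j + 1 else 1) else 0 := by
    intro j hj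
    rw [Finset.mem_range] at hj
    by_cases hjN : j < N - 1
    · rw [if_pos hjN]
      by_cases hkj : k ≤ j
      · rw [if_pos hkj]
        have h1 : (∑ i ∈ range N, if i ≤ j ∧ j < N - 1 ∧ (i = j ∨ k ≤ j) then 1 else 0)
            = ∑ i ∈ range N, if 0 ≤ i ∧ i < j + 1 then 1 else 0 := by
          refine Finset.sum_congr rfl fun i _ => ?_
          congr 1
          simp only [eq_iff_iff]
          constructor <;> intro h
          · exact ⟨Nat.zero_le _, by omega⟩
          · exact ⟨by omega, hjN, Or.inr hkj⟩
        rw [h1, inner_card N 0 (j + 1) (by omega)]; omega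
      · rw [if_neg hkj]
        have h1 : (∑ i ∈ range N, if i ≤ j ∧ j < N - 1 ∧ (i = j ∨ k ≤ j) then 1 else 0)
            = ∑ i ∈ range N, if i = j then 1 else 0 := by
          refine Finset.sum_congr rfl fun i _ => ?_
          congr 1
          simp only [eq_iff_iff]
          constructor <;> intro h
          · rcases h.2.2 with h' | h'
            · exact h'
            · exact absurd h' hkj
          · exact ⟨by omega, hjN, Or.inl h⟩
        rw [h1, Finset.sum_ite_eq' (range N) j (fun _ => 1),
          if_pos (Finset.mem_range.2 hj)]
    · rw [if_neg hjN]
      exact Finset.sum_eq_zero fun i _ => by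
        rw [if_neg]; rintro ⟨-, h2, -⟩; omega
  rw [Finset.sum_congr rfl step1, ← Finset.sum_filter]
  have hf : (range N).filter (fun j => j < N - 1) = range (N - 1) := by
    ext x; simp [Finset.mem_range]; omega
  rw [hf]
  have step2 : ∀ j ∈ range (N - 1), (if k ≤ j then j + 1 else 1)
      = (if k ≤ j then j else 0) + 1 := by
    intro j _; split_ifs <;> omega
  rw [Finset.sum_congr rfl step2, Finset.sum_add_distrib, Finset.sum_const,
    Finset.card_range, smul_eq_mul, mul_one, ← Finset.sum_filter]
  have hf2 : (range (N - 1)).filter (fun j => k ≤ j) = Finset.Ico k (N - 1) := by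
    ext x; simp [Finset.mem_range, Finset.mem_Ico]; omega
  rw [hf2, Finset.sum_Ico_eq_sum_range, Finset.sum_add_distrib, Finset.sum_const,
    Finset.card_range, smul_eq_mul]
  ring

lemma GG (m : ℕ) : (∑ t ∈ range (m + 1), t) + ∑ t ∈ range m, t = m * m := by
  induction m with
  | zero => simp
  | succ m ih =>
    have h1 : (∑ t ∈ range (m + 1 + 1), t) = (∑ t ∈ range (m + 1), t) + (m + 1) :=
      Finset.sum_range_succ _ _
    have h2 : (∑ t ∈ range (m + 1), t) = (∑ t ∈ range m, t) + m :=
      Finset.sum_range_succ _ _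
    have h : (m + 1) * (m + 1) = m * m + 2 * m + 1 := by ring
    omega

lemma countNat (N k : ℕ) (hN : 1 ≤ N) (hk1 : 1 ≤ k) (hk : k ≤ N - 1) :
    (∑ i ∈ range N, ∑ j ∈ range N, (if k ≤ i ∧ i ≤ j then 1 else 0))
      + (∑ i ∈ range N, ∑ j ∈ range N, (if k ≤ i ∧ i ≤ j ∧ j < N - 1 then 1 else 0))
      + (∑ i ∈ range N, ∑ j ∈ range N, (if i ≤ j ∧ j < N - 1 ∧ (i = j ∨ k ≤ j) then 1 else 0))
      = (N - k + 1) * (N - k) / 2 + (N - 1) * (N - k) := by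
  rw [S1_eval N k (by omega), S2_eval N k hk hN, S3_eval N k hk hN]
  obtain ⟨m, hm⟩ : ∃ m, N = k + m + 1 := ⟨N - k - 1, by omega⟩
  subst hm
  have e1 : k + m + 1 - k = m + 1 := by omega
  have e2 : k + m + 1 - 1 - k = m := by omega
  have e3 : k + m + 1 - 1 = k + m := by omega
  rw [e1, e2, e3]
  have ediv : (m + 1 + 1) * (m + 1) / 2 = ∑ t ∈ range (m + 2), t := by
    rw [Finset.sum_range_id]
    congr 1
  have esucc : (∑ t ∈ range (m + 2), t) = (∑ t ∈ range (m + 1), t) + (m + 1) :=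
    Finset.sum_range_succ _ _
  have hGG := GG m
  have hre : (k + m) * (m + 1) = m * k + k + m * m + m := by ring
  rw [ediv, esucc]
  omega

end Counting

-- ### stage 6: assembling
lemma sum_fin_fin (n : ℕ) (f : ℕ → ℕ → ℕ) :
    ∑ i : Fin n, ∑ j : Fin n, f i j = ∑ i ∈ Finset.range n, ∑ j ∈ Finset.range n, f i j := by
  rw [← Fin.sum_univ_eq_sum_range (fun i => ∑ j ∈ Finset.range n, f i j) n]
  exact Finset.sum_congr rfl fun i _ => (Fin.sum_univ_eq_sum_range (fun j => f i j) n)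

lemma card_SubT (n k : ℕ) :
    Fintype.card (SubT n k)
      = (∑ i ∈ Finset.range n, ∑ j ∈ Finset.range n, (if k ≤ i ∧ i ≤ j then 1 else 0))
      + (∑ i ∈ Finset.range n, ∑ j ∈ Finset.range n, (if k ≤ i ∧ i ≤ j ∧ j < n - 1 then 1 else 0))
      + (∑ i ∈ Finset.range n, ∑ j ∈ Finset.range n,
          (if i ≤ j ∧ j < n - 1 ∧ (i = j ∨ k ≤ j) then 1 else 0)) := by
  rw [Fintype.card_subtype, Finset.card_filter]
  rw [Fintype.sum_prod_type]
  simp only [Fintype.sum_sum_type]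
  dsimp only [Pfree]
  simp only [if_false, Finset.sum_const_zero, zero_add, add_zero,
    Finset.sum_add_distrib]
  rw [sum_fin_fin n (fun a b => if k ≤ a ∧ a ≤ b then 1 else 0),
    sum_fin_fin n (fun a b => if k ≤ a ∧ a ≤ b ∧ b < n - 1 then 1 else 0),
    sum_fin_fin n (fun a b => if a ≤ b ∧ b < n - 1 ∧ (a = b ∨ k ≤ b) then 1 else 0)]
  simp only [↓reduceIte, Finset.sum_const_zero, zero_add]

lemma finrank_lt (n k : ℕ) (hn : 1 ≤ n) (hk1 : 1 ≤ k) (hk : k ≤ n - 1) :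
    Module.finrank ℝ (g2P2e n k) = (n - k + 1) * (n - k) / 2 + (n - 1) * (n - k) := by
  have E : (SubT n k → ℝ) ≃ₗ[ℝ] g2P2e n k := by
    refine LinearEquiv.ofLinear
      ((sigmaMap n k).codRestrict (g2P2e n k) (fun c => sigma_mem n k hn hk c))
      ((piMap n k).comp (g2P2e n k).subtype) ?_ ?_
    · apply LinearMap.ext
      intro A
      apply Subtype.ext
      exact sigma_pi n k hn hk A.1 A.2
    · apply LinearMap.ext
      intro c
      exact pi_sigma n k c
  rw [← E.finrank_eq, Module.finrank_pi, card_SubT, countNat n k hn hk1 hk]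

-- ### stage 7: the case k ≥ n
lemma g2_bot (n k : ℕ) (hn : 1 ≤ n) (hkn : n ≤ k) : g2P2e n k = ⊥ := by
  rw [Submodule.eq_bot_iff]
  rintro A ⟨hs, hC, hPJ, hann⟩
  have EC : ∀ X, A X (eb n (Sum.inr ⟨n - 1, by omega⟩)) = 0 := by
    intro X; rw [← Cvec_eb hn]; exact hC X
  have E3 : ∀ i j : Fin n, A (eb n (Sum.inl i)) (eb n (Sum.inr j))
      = A (eb n (Sum.inl j)) (eb n (Sum.inr i)) := by
    intro i j; exact hPJ (eb n (Sum.inl i)) (eb n (Sum.inl j))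
  have E1 : ∀ p : Fin n, (p : ℕ) < n - 1 → ∀ X, A (eb n (Sum.inl p)) X
      = -(((p : ℕ) : ℝ) + 1) * A (eb n (Sum.inr p)) X := by
    intro p hp X
    have hpn : (p : ℕ) + 1 < n := by omega
    have h := hann ((p : ℕ) + 1) (by omega) (by omega) X
    rw [ehat, if_pos hpn, hvec_eb _ (by omega) (by omega),
      vvec_eb _ (by omega) (by omega)] at h
    have hip : (⟨(p : ℕ) + 1 - 1, by omega⟩ : Fin n) = p := Fin.ext (by simp)
    simp only [hip] at h
    rw [map_add, LinearMap.add_apply, map_smul, LinearMap.smul_apply, smul_eq_mul] at h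
    push_cast at h
    linarith
  have E4 : ∀ i j : Fin n, (i : ℕ) ≠ (j : ℕ) → (i : ℕ) < n - 1 → (j : ℕ) < n - 1 →
      A (eb n (Sum.inr i)) (eb n (Sum.inr j)) = 0 := by
    intro i j hne hi hj
    have h1 := E1 i hi (eb n (Sum.inr j))
    have h2 := E1 j hj (eb n (Sum.inr i))
    have h3 := E3 i j
    have h4 := hs (eb n (Sum.inr j)) (eb n (Sum.inr i))
    have h6 : (((j : ℕ) : ℝ) - ((i : ℕ) : ℝ)) * A (eb n (Sum.inr i)) (eb n (Sum.inr j)) = 0 := by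
      linear_combination h3 - h1 + h2 + (-(((j : ℕ) : ℝ)) - 1) * h4
    rcases mul_eq_zero.1 h6 with h | h
    · exfalso
      have : ((i : ℕ) : ℝ) = ((j : ℕ) : ℝ) := by linarith
      exact hne (by exact_mod_cast this)
    · exact h
  have Woff : ∀ i j : Fin n, (i : ℕ) ≠ (j : ℕ) →
      A (eb n (Sum.inr i)) (eb n (Sum.inr j)) = 0 := by
    intro i j hne
    by_cases hj : (j : ℕ) < n - 1
    · by_cases hi : (i : ℕ) < n - 1
      · exact E4 i j hne hi hj
      · have : i = ⟨n - 1, by omega⟩ := by apply Fin.ext; show (i : ℕ) = n - 1; omega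
        rw [this, hs]
        exact EC _
    · have : j = ⟨n - 1, by omega⟩ := by apply Fin.ext; show (j : ℕ) = n - 1; omega
      rw [this]
      exact EC _
  have En : ∀ X, A (eb n (Sum.inl ⟨n - 1, by omega⟩)) X
      + ∑ p : Fin n, A (eb n (Sum.inr p)) X = 0 := by
    intro X
    have h := hann n hn (by omega) X
    rw [ehat, if_neg (lt_irrefl n), if_pos rfl, Svec, hvec_eb n hn le_rfl] at h
    have hsum : (∑ i ∈ Finset.Icc 1 n, vvec n i) = ∑ p : Fin n, eb n (Sum.inr p) := by
      rw [← Finset.Ico_add_one_right_eq_Icc, Finset.sum_Ico_eq_sum_range]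
      have hr : n + 1 - 1 = n := by omega
      rw [hr, ← Fin.sum_univ_eq_sum_range (fun t => vvec n (1 + t)) n]
      refine Finset.sum_congr rfl fun p _ => ?_
      rw [vvec_eb (1 + (p : ℕ)) (by omega) (by omega)]
      congr 1
      congr 1
      apply Fin.ext
      show 1 + (p : ℕ) - 1 = (p : ℕ)
      omega
    rw [hsum] at h
    rw [map_add, LinearMap.add_apply, map_sum, LinearMap.sum_apply] at h
    exact h
  have Wdiag : ∀ i : Fin n, A (eb n (Sum.inr i)) (eb n (Sum.inr i)) = 0 := by
    intro i
    have h := En (eb n (Sum.inr i))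
    have h1 : A (eb n (Sum.inl ⟨n - 1, by omega⟩)) (eb n (Sum.inr i)) = 0 := by
      rw [E3]; exact EC _
    have h2 : (∑ p : Fin n, A (eb n (Sum.inr p)) (eb n (Sum.inr i)))
        = A (eb n (Sum.inr i)) (eb n (Sum.inr i)) := by
      rw [Finset.sum_eq_single i]
      · intro b _ hb
        exact Woff b i (fun hc => hb (Fin.ext hc))
      · intro hmem
        exact absurd (Finset.mem_univ i) hmem
    rw [h1, h2] at h
    linarith
  have W0 : ∀ i j : Fin n, A (eb n (Sum.inr i)) (eb n (Sum.inr j)) = 0 := by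
    intro i j
    by_cases hij : (i : ℕ) = (j : ℕ)
    · have : i = j := Fin.ext hij
      rw [this]; exact Wdiag j
    · exact Woff i j hij
  have M0 : ∀ i j : Fin n, A (eb n (Sum.inl i)) (eb n (Sum.inr j)) = 0 := by
    intro i j
    by_cases hi : (i : ℕ) < n - 1
    · rw [E1 i hi, W0]; ring
    · have : i = ⟨n - 1, by omega⟩ := by apply Fin.ext; show (i : ℕ) = n - 1; omega
      rw [this, E3]
      exact EC _
  have H0 : ∀ i j : Fin n, A (eb n (Sum.inl i)) (eb n (Sum.inl j)) = 0 := by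
    intro i j
    by_cases hi : (i : ℕ) < n - 1
    · rw [E1 i hi, hs (eb n (Sum.inr i)) (eb n (Sum.inl j)), M0]; ring
    · have hlast : i = ⟨n - 1, by omega⟩ := by apply Fin.ext; show (i : ℕ) = n - 1; omega
      have h := En (eb n (Sum.inl j))
      have h2 : (∑ p : Fin n, A (eb n (Sum.inr p)) (eb n (Sum.inl j))) = 0 := by
        refine Finset.sum_eq_zero fun p _ => ?_
        rw [hs (eb n (Sum.inr p)) (eb n (Sum.inl j)), M0]
      rw [h2, add_zero] at h
      rw [hlast]
      exact h
  have : A = (0 : Bil n) := by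
    apply bil_ext
    intro a c
    simp only [LinearMap.zero_apply]
    cases a with
    | inl i =>
      cases c with
      | inl j => exact H0 i j
      | inr j => exact M0 i j
    | inr i =>
      cases c with
      | inl j => rw [hs (eb n (Sum.inr i)) (eb n (Sum.inl j))]; exact M0 j i
      | inr j => exact W0 i j
  exact this


/-- for `1 ≤ k ≤ 2n` the subspace `g₂(P₂)_{ê₁…ê_k}` has dimension
`(n−k+1)(n−k)/2 + (n−1)(n−k)` if `k ≤ n`, and `0` if `k > n`. -/
theorem dim_g2P2e (n k : ℕ) (hn : 1 ≤ n) (hk1 : 1 ≤ k) (hk2 : k ≤ 2 * n) :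
    Module.finrank ℝ (g2P2e n k) =
      if k ≤ n then (n - k + 1) * (n - k) / 2 + (n - 1) * (n - k) else 0 := by
  rcases lt_trichotomy k n with hlt | heq | hgt
  · rw [if_pos (le_of_lt hlt)]
    exact finrank_lt n k hn hk1 (by omega)
  · rw [if_pos (by omega), g2_bot n k hn (by omega), heq]
    simp [finrank_bot]
  · rw [if_neg (by omega), g2_bot n k hn (by omega)]
    simp [finrank_bot]
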